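/- For any integer $p \geq 0$ and dimension $m \geq 1$, consider any axis-aligned rectangle obtained from $[0,1]^m$ by $p$ successive max-edge midpoint splits (at each step, an edge of maximal length is bisected). Then every edge of the resulting rectangle has length between $2^{-\lceil p/m \rceil}$ and $2^{-\lfloor p/m \rfloor}$, and consequently the Euclidean diameter of the rectangle is between $2^{-1}\sqrt{m}\, 2^{-p/m}$ and $2\sqrt{m}\, 2^{-p/m}$. -/

import Mathlib

/-- Max-edge midpoint splitting of `[0,1]^m`: record the edge lengths `len k` of the
cell after `k` splits, starting from all edges of length `1`; at each step `k < p` the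
split dimension `ℓ k` has maximal edge length and that edge is halved. After `p` splits,
every edge has length between `2^{-⌈p/m⌉}` and `2^{-⌊p/m⌋}`, and consequently the
Euclidean diameter `√(∑ len p j ²)` lies between `2⁻¹ √m · 2^{-p/m}` and
`2 √m · 2^{-p/m}`. -/
theorem max_edge_cell_diameter (p m : ℕ) (hm : 1 ≤ m)
    (len : ℕ → Fin m → ℝ) (ℓ : ℕ → Fin m)
    (h0 : ∀ j, len 0 j = 1)
    (hmax : ∀ k, k < p → ∀ j, len k j ≤ len k (ℓ k))
    (hstep : ∀ k, k < p → ∀ j, len (k + 1) j = if j = ℓ k then len k j / 2 else len k j) :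
    (∀ j, (2 : ℝ) ^ (-(⌈(p : ℝ) / m⌉ : ℤ)) ≤ len p j ∧
      len p j ≤ (2 : ℝ) ^ (-(⌊(p : ℝ) / m⌋ : ℤ))) ∧
    2⁻¹ * Real.sqrt m * (2 : ℝ) ^ (-((p : ℝ) / m)) ≤ Real.sqrt (∑ j, (len p j) ^ 2) ∧
    Real.sqrt (∑ j, (len p j) ^ 2) ≤ 2 * Real.sqrt m * (2 : ℝ) ^ (-((p : ℝ) / m)) := by
  classical
  have hmR : (1:ℝ) ≤ (m:ℝ) := by exact_mod_cast hm
  have hmpos : (0:ℝ) < (m:ℝ) := by linarith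
  set n : ℕ → Fin m → ℕ := fun k j => ((Finset.range k).filter (fun i => ℓ i = j)).card with hn
  -- edge lengths are powers of two, exponents count splits
  have hns : ∀ k j, n (k+1) j = n k j + if ℓ k = j then 1 else 0 := by
    intro k j
    simp only [hn, Finset.range_add_one, Finset.filter_insert]
    split
    · rw [Finset.card_insert_of_notMem (by simp)]
    · simp
  have hlen : ∀ k, k ≤ p → ∀ j, len k j = (2:ℝ) ^ (-(n k j : ℤ)) := by
    intro k
    induction k with
    | zero => intro _ j; simp [hn, h0]
    | succ k ih =>
      intro hk j
      have hk' : k < p := hk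
      have ihk := ih (le_of_lt hk')
      rw [hstep k hk' j, hns k j]
      by_cases hj : j = ℓ k
      · simp only [hj, if_pos rfl, ite_true, if_pos (rfl : ℓ k = ℓ k)]
        rw [ihk (ℓ k)]
        push_cast
        rw [neg_add, zpow_add₀ (two_ne_zero : (2:ℝ) ≠ 0)]
        norm_num
        ring
      · rw [if_neg hj, if_neg (fun h => hj h.symm), ihk j]
        simp
  -- counts are balanced
  have hbal : ∀ k, k ≤ p → ∀ j j', n k j ≤ n k j' + 1 := by
    intro k
    induction k with
    | zero => intro _ j j'; simp [hn]
    | succ k ih =>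
      intro hk j j'
      have hk' : k < p := hk
      have hmin : ∀ j'', n k (ℓ k) ≤ n k j'' := by
        intro j''
        have h1 := hmax k hk' j''
        rw [hlen k (le_of_lt hk') j'', hlen k (le_of_lt hk') (ℓ k)] at h1
        have := (zpow_le_zpow_iff_right₀ (by norm_num : (1:ℝ) < 2)).1 h1
        omega
      have hb := ih (le_of_lt hk')
      rw [hns k j, hns k j']
      by_cases h1 : ℓ k = j
      · subst h1
        have := hmin j'
        split <;> omega
      · have := hb j j'
        split <;> omega
  -- total count
  have hsum : ∑ j, n p j = p := by
    have := Finset.card_eq_sum_card_fiberwise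
      (f := ℓ) (s := Finset.range p) (t := Finset.univ) (fun x _ => Finset.mem_univ _)
    simpa [hn] using this.symm
  set x : ℝ := (p:ℝ) / m with hx
  have hxm : x * m = p := by rw [hx]; field_simp
  have hsumR : ∑ j, ((n p j : ℝ)) = (p:ℝ) := by exact_mod_cast hsum
  -- bounds on counts
  have key : ∀ j, (⌊x⌋ : ℤ) ≤ (n p j : ℤ) ∧ (n p j : ℤ) ≤ ⌈x⌉ := by
    intro j
    have hsplit : (n p j : ℝ) + ∑ j' ∈ Finset.univ.erase j, ((n p j' : ℝ)) = (p:ℝ) := by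
      have h := Finset.add_sum_erase Finset.univ (fun j' => ((n p j' : ℝ))) (Finset.mem_univ j)
      rw [hsumR] at h
      exact h
    have hcard : ((Finset.univ.erase j).card : ℝ) = (m:ℝ) - 1 := by
      rw [Finset.card_erase_of_mem (Finset.mem_univ j)]
      simp
      rw [Nat.cast_sub hm]
      simp
    constructor
    · by_contra h
      push_neg at h
      have h1 : (n p j : ℤ) + 1 ≤ ⌊x⌋ := h
      have h2 : (n p j : ℝ) + 1 ≤ x := by
        have := Int.floor_le x
        have h1' : ((n p j : ℤ) : ℝ) + 1 ≤ (⌊x⌋ : ℝ) := by exact_mod_cast h1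
        push_cast at h1' ⊢
        linarith
      have h3 : ∀ j' ∈ Finset.univ.erase j, ((n p j' : ℝ)) ≤ x := by
        intro j' _
        have := hbal p le_rfl j' j
        have : (n p j' : ℝ) ≤ (n p j : ℝ) + 1 := by exact_mod_cast this
        linarith
      have h4 : ∑ j' ∈ Finset.univ.erase j, ((n p j' : ℝ)) ≤ ((Finset.univ.erase j).card : ℝ) * x :=
        by
        calc ∑ j' ∈ Finset.univ.erase j, ((n p j' : ℝ))
            ≤ (Finset.univ.erase j).card • x := Finset.sum_le_card_nsmul _ _ _ h3
          _ = ((Finset.univ.erase j).card : ℝ) * x := by rw [nsmul_eq_mul]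
      rw [hcard] at h4
      nlinarith
    · by_contra h
      push_neg at h
      have h1 : ⌈x⌉ + 1 ≤ (n p j : ℤ) := h
      have h2 : x + 1 ≤ (n p j : ℝ) := by
        have := Int.le_ceil x
        have h1' : (⌈x⌉ : ℝ) + 1 ≤ ((n p j : ℤ) : ℝ) := by exact_mod_cast h1
        push_cast at h1' ⊢
        linarith
      have h3 : ∀ j' ∈ Finset.univ.erase j, x ≤ ((n p j' : ℝ)) := by
        intro j' _
        have := hbal p le_rfl j j'
        have : (n p j : ℝ) ≤ (n p j' : ℝ) + 1 := by exact_mod_cast this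
        linarith
      have h4 : ((Finset.univ.erase j).card : ℝ) * x ≤ ∑ j' ∈ Finset.univ.erase j, ((n p j' : ℝ)) :=
        by
        calc ((Finset.univ.erase j).card : ℝ) * x
            = (Finset.univ.erase j).card • x := by rw [nsmul_eq_mul]
          _ ≤ _ := Finset.card_nsmul_le_sum _ _ _ h3
      rw [hcard] at h4
      nlinarith
  -- edge bounds
  set A : ℝ := (2:ℝ) ^ (-(⌈x⌉ : ℤ)) with hA
  set B : ℝ := (2:ℝ) ^ (-(⌊x⌋ : ℤ)) with hB
  have hApos : 0 < A := by positivity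
  have hBpos : 0 < B := by positivity
  have hedge : ∀ j, A ≤ len p j ∧ len p j ≤ B := by
    intro j
    obtain ⟨hlo, hhi⟩ := key j
    rw [hlen p le_rfl j]
    constructor
    · exact zpow_le_zpow_right₀ one_le_two (by omega)
    · exact zpow_le_zpow_right₀ one_le_two (by omega)
  refine ⟨hedge, ?_, ?_⟩
  · -- lower bound on diameter
    have hS : (m:ℝ) * A ^ 2 ≤ ∑ j, (len p j) ^ 2 := by
      calc (m:ℝ) * A ^ 2 = (Finset.univ : Finset (Fin m)).card • (A^2) := by
            simp [nsmul_eq_mul]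
        _ ≤ ∑ j, (len p j) ^ 2 := by
            apply Finset.card_nsmul_le_sum
            intro j _
            exact pow_le_pow_left₀ hApos.le (hedge j).1 2
    have hsq : Real.sqrt ((m:ℝ) * A ^ 2) = Real.sqrt m * A := by
      rw [Real.sqrt_mul (by positivity), Real.sqrt_sq hApos.le]
    have h1 : Real.sqrt m * A ≤ Real.sqrt (∑ j, (len p j) ^ 2) := by
      rw [← hsq]; exact Real.sqrt_le_sqrt hS
    have h2 : 2⁻¹ * (2:ℝ) ^ (-x) ≤ A := by
      have hceil : (⌈x⌉ : ℝ) ≤ x + 1 := by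
        have := Int.ceil_lt_add_one x; linarith
      have hAeq : A = (2:ℝ) ^ (((-⌈x⌉ : ℤ) : ℝ)) := by
        rw [hA, Real.rpow_intCast]
      rw [hAeq]
      calc 2⁻¹ * (2:ℝ) ^ (-x) = (2:ℝ) ^ (-x - 1) := by
            rw [Real.rpow_sub (by norm_num), Real.rpow_one]; ring
        _ ≤ (2:ℝ) ^ (((-⌈x⌉ : ℤ) : ℝ)) := by
            apply Real.rpow_le_rpow_of_exponent_le one_le_two
            have := Int.ceil_lt_add_one x
            push_cast
            linarith
    calc 2⁻¹ * Real.sqrt m * (2:ℝ) ^ (-x) = Real.sqrt m * (2⁻¹ * (2:ℝ) ^ (-x)) := by ring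
      _ ≤ Real.sqrt m * A := by
          apply mul_le_mul_of_nonneg_left h2 (Real.sqrt_nonneg _)
      _ ≤ _ := h1
  · -- upper bound
    have hS : ∑ j, (len p j) ^ 2 ≤ (m:ℝ) * B ^ 2 := by
      calc ∑ j, (len p j) ^ 2 ≤ (Finset.univ : Finset (Fin m)).card • (B^2) := by
            apply Finset.sum_le_card_nsmul
            intro j _
            have h := hedge j
            have h0 : 0 ≤ len p j := le_trans hApos.le h.1
            exact pow_le_pow_left₀ h0 h.2 2
        _ = (m:ℝ) * B ^ 2 := by simp [nsmul_eq_mul]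
    have hsq : Real.sqrt ((m:ℝ) * B ^ 2) = Real.sqrt m * B := by
      rw [Real.sqrt_mul (by positivity), Real.sqrt_sq hBpos.le]
    have h1 : Real.sqrt (∑ j, (len p j) ^ 2) ≤ Real.sqrt m * B := by
      rw [← hsq]; exact Real.sqrt_le_sqrt hS
    have h2 : B ≤ 2 * (2:ℝ) ^ (-x) := by
      have hfloor : x - 1 ≤ (⌊x⌋ : ℝ) := by
        have := Int.sub_one_lt_floor x; linarith
      have hBeq : B = (2:ℝ) ^ (((-⌊x⌋ : ℤ) : ℝ)) := by
        rw [hB, Real.rpow_intCast]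
      rw [hBeq]
      calc (2:ℝ) ^ (((-⌊x⌋ : ℤ) : ℝ)) ≤ (2:ℝ) ^ (-x + 1) := by
            apply Real.rpow_le_rpow_of_exponent_le one_le_two
            have := Int.sub_one_lt_floor x
            push_cast
            linarith
        _ = 2 * (2:ℝ) ^ (-x) := by
            rw [Real.rpow_add (by norm_num), Real.rpow_one]; ring
    calc Real.sqrt (∑ j, (len p j) ^ 2) ≤ Real.sqrt m * B := h1
      _ ≤ Real.sqrt m * (2 * (2:ℝ) ^ (-x)) := by
          apply mul_le_mul_of_nonneg_left h2 (Real.sqrt_nonneg _)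
      _ = 2 * Real.sqrt m * (2:ℝ) ^ (-x) := by ring
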